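/- Let G be a locally nonforesty graph, let S be the set of vertices of G of degree exactly 3, and suppose the subgraph of G induced by S has maximum degree at most 1. Then every vertex u ∉ S that has exactly i ≥ 1 neighbors in S satisfies deg(u) ≥ i + 1. -/
import Mathlib


/-- A graph `G` is locally nonforesty if for every vertex `v`, the subgraph induced by
the neighborhood of `v` contains a cycle (i.e., is not acyclic). -/
def LocallyNonforesty {V : Type*} (G : SimpleGraph V) : Prop :=
  ∀ v : V, ¬ (G.induce (G.neighborSet v)).IsAcyclic


lemma tri_of_not_acyclic {X : Type*} (H : SimpleGraph X) (hcard : Nat.card X = 3)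
    (h : ¬ H.IsAcyclic) : ∀ x y : X, x ≠ y → H.Adj x y := by
  classical
  have : Finite X := Nat.finite_of_card_ne_zero (by omega)
  have : Fintype X := Fintype.ofFinite X
  simp only [SimpleGraph.IsAcyclic, not_forall, not_not] at h
  obtain ⟨v, p, hp⟩ := h
  have h3 : 3 ≤ p.length := hp.three_le_length
  have hnd : p.support.tail.Nodup := hp.2
  have hle : p.support.tail.length ≤ Fintype.card X := hnd.length_le_card
  have hcard' : Fintype.card X = 3 := by rw [← Nat.card_eq_fintype_card]; exact hcard
  have htl : p.support.tail.length = p.length := by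
    simp [List.length_tail, SimpleGraph.Walk.length_support]
  have hlen : p.length = 3 := by omega
  cases p with
  | nil => simp at hlen
  | cons h1 q =>
    rename_i a
    cases q with
    | nil => simp at hlen
    | cons h2 r =>
      rename_i b
      cases r with
      | nil => simp at hlen
      | cons h3' s =>
        rename_i c
        cases s with
        | nil =>
          -- walk v → a → b → v, c = v
          simp only [SimpleGraph.Walk.support_cons, SimpleGraph.Walk.support_nil,
            List.tail_cons, List.nodup_cons, List.mem_cons, List.mem_singleton,
            List.not_mem_nil, or_false, List.nodup_nil, and_true] at hnd
          have hab : a ≠ b := fun e => hnd.1 (Or.inl e)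
          have hav : a ≠ v := fun e => hnd.1 (Or.inr e)
          have hbv : b ≠ v := hnd.2.1
          have huniv : ∀ x : X, x = v ∨ x = a ∨ x = b := by
            have : ({v, a, b} : Finset X) = Finset.univ := by
              apply Finset.eq_univ_of_card
              rw [hcard']
              rw [Finset.card_insert_of_notMem (by simp [hav.symm, hbv.symm]),
                Finset.card_insert_of_notMem (by simp [hab])]
              simp
            intro x
            have := this ▸ Finset.mem_univ x
            simpa using this
          intro x y hxy
          rcases huniv x with rfl | rfl | rfl <;> rcases huniv y with rfl | rfl | rfl <;>
            first
            | exact absurd rfl hxy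
            | assumption
            | exact h1.symm
            | exact h2.symm
            | exact h3'
            | exact h3'.symm
        | cons h4 t => simp at hlen


theorem stmt_8 {V : Type*} [Fintype V] (G : SimpleGraph V)
    (hloc : LocallyNonforesty G)
    -- the subgraph induced by the set `S` of degree-3 vertices has maximum degree ≤ 1
    (hS : ∀ v : V, (G.neighborSet v).ncard = 3 →
      ({u : V | (G.neighborSet u).ncard = 3} ∩ G.neighborSet v).ncard ≤ 1)
    (u : V) (hu : (G.neighborSet u).ncard ≠ 3) (i : ℕ) (hi : 1 ≤ i)
    (hni : ({w : V | (G.neighborSet w).ncard = 3} ∩ G.neighborSet u).ncard = i) :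
    i + 1 ≤ (G.neighborSet u).ncard := by
  classical
  by_contra hcon
  push_neg at hcon
  set S : Set V := {w : V | (G.neighborSet w).ncard = 3} with hSdef
  have hfin : (G.neighborSet u).Finite := Set.toFinite _
  have hsub : S ∩ G.neighborSet u ⊆ G.neighborSet u := Set.inter_subset_right
  have hle : i ≤ (G.neighborSet u).ncard := hni ▸ Set.ncard_le_ncard hsub hfin
  have heq : (G.neighborSet u).ncard = i := by omega
  have hNS : G.neighborSet u ⊆ S := by
    have : S ∩ G.neighborSet u = G.neighborSet u :=
      Set.eq_of_subset_of_ncard_le hsub (by rw [hni, heq]) hfin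
    intro x hx
    have : x ∈ S ∩ G.neighborSet u := this.symm ▸ hx
    exact this.1
  -- pick w ∈ S ∩ N(u)
  obtain ⟨w, hw⟩ : (S ∩ G.neighborSet u).Nonempty := by
    rw [← Set.ncard_pos (Set.toFinite _)] at *
    omega
  have hw3 : (G.neighborSet w).ncard = 3 := hw.1
  have huw : u ∈ G.neighborSet w := (G.mem_neighborSet w u).2 ((G.mem_neighborSet u w).1 hw.2).symm
  -- triangle on N(w)
  have hcard : Nat.card ↥(G.neighborSet w) = 3 := by
    rw [Nat.card_coe_set_eq]; exact hw3
  have htri := tri_of_not_acyclic _ hcard (hloc w)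
  have hadj : ∀ x y : V, x ∈ G.neighborSet w → y ∈ G.neighborSet w → x ≠ y → G.Adj x y := by
    intro x y hx hy hxy
    exact htri ⟨x, hx⟩ ⟨y, hy⟩ (fun e => hxy (congrArg Subtype.val e))
  -- N(w) = {x,y,z}
  obtain ⟨x, y, z, hxy, hxz, hyz, hNw⟩ := Set.ncard_eq_three.1 hw3
  -- u is one of them; get the other two a b
  have hu3 : u = x ∨ u = y ∨ u = z := by
    have := hNw ▸ huw; simpa using this
  obtain ⟨a, b, hab, hua, hub, haN, hbN⟩ :
      ∃ a b, a ≠ b ∧ u ≠ a ∧ u ≠ b ∧ a ∈ G.neighborSet w ∧ b ∈ G.neighborSet w := by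
    rcases hu3 with rfl | rfl | rfl
    · exact ⟨y, z, hyz, hxy, hxz, by simp [hNw], by simp [hNw]⟩
    · exact ⟨x, z, hxz, hxy.symm, hyz, by simp [hNw], by simp [hNw]⟩
    · exact ⟨x, y, hxy, hxz.symm, hyz.symm, by simp [hNw], by simp [hNw]⟩
  have haS : a ∈ S := hNS ((G.mem_neighborSet u a).2 (hadj u a huw haN hua))
  have hbS : b ∈ S := hNS ((G.mem_neighborSet u b).2 (hadj u b huw hbN hub))
  have h2 : ({a, b} : Set V) ⊆ S ∩ G.neighborSet w := by
    intro t ht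
    rcases ht with rfl | rfl
    · exact ⟨haS, haN⟩
    · exact ⟨hbS, hbN⟩
  have := hS w hw3
  have h2' : 2 ≤ (S ∩ G.neighborSet w).ncard := by
    have := Set.ncard_le_ncard h2 (Set.toFinite _)
    rwa [Set.ncard_pair hab] at this
  omega
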